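/- Under the setup M = A Gᵀ (rank r factors) and S with κ = σ_min(S|_{Col(G)}) > 0, setting δ = σ_r(M), δ' = σ_r(M Sᵀ), and δ_min = min(δ, δ'), one has δ_min ≥ min(1, κ) · σ_r(A) · σ_r(G). -/

import Mathlib

set_option maxHeartbeats 1000000

open Matrix

noncomputable def opNorm {m n : ℕ} (A : Matrix (Fin m) (Fin n) ℝ) : ℝ :=
  ‖(Matrix.toEuclideanLin A).toContinuousLinearMap‖

noncomputable def colSpace {m n : ℕ} (A : Matrix (Fin m) (Fin n) ℝ) :
    Submodule ℝ (EuclideanSpace ℝ (Fin m)) :=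
  LinearMap.range (Matrix.toEuclideanLin A)

noncomputable def rowSpace {m n : ℕ} (A : Matrix (Fin m) (Fin n) ℝ) :
    Submodule ℝ (EuclideanSpace ℝ (Fin n)) :=
  colSpace Aᵀ

noncomputable def projOp {n : ℕ} (U : Submodule ℝ (EuclideanSpace ℝ (Fin n))) :
    EuclideanSpace ℝ (Fin n) →L[ℝ] EuclideanSpace ℝ (Fin n) :=
  U.subtypeL.comp (U.orthogonalProjection)

noncomputable def subDist {n : ℕ} (U V : Submodule ℝ (EuclideanSpace ℝ (Fin n))) : ℝ :=
  ‖projOp U - projOp V‖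

noncomputable def sval {m n : ℕ} (k : ℕ) (A : Matrix (Fin m) (Fin n) ℝ) : ℝ :=
  sSup {c : ℝ | ∃ V : Submodule ℝ (EuclideanSpace ℝ (Fin n)),
    Module.finrank ℝ V = k ∧ ∀ v ∈ V, c * ‖v‖ ≤ ‖Matrix.toEuclideanLin A v‖}

noncomputable def frobNorm {m n : ℕ} (A : Matrix (Fin m) (Fin n) ℝ) : ℝ :=
  Real.sqrt (∑ i, ∑ j, (A i j) ^ 2)

/-- auxiliary: the defining set of `sval` is bounded above when `0 < k`. -/
lemma sval_set_bddAbove {m n k : ℕ} (hk : 0 < k) (C : Matrix (Fin m) (Fin n) ℝ) :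
    BddAbove {c : ℝ | ∃ V : Submodule ℝ (EuclideanSpace ℝ (Fin n)),
      Module.finrank ℝ V = k ∧ ∀ v ∈ V, c * ‖v‖ ≤ ‖Matrix.toEuclideanLin C v‖} := by
  refine ⟨‖(Matrix.toEuclideanLin C).toContinuousLinearMap‖, ?_⟩
  rintro c ⟨V, hV, h⟩
  have hVbot : V ≠ ⊥ := by
    intro hb
    rw [hb, finrank_bot] at hV
    omega
  obtain ⟨v, hvV, hv0⟩ := Submodule.exists_mem_ne_zero_of_ne_bot hVbot
  have h1 := h v hvV
  have h2 : ‖Matrix.toEuclideanLin C v‖ ≤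
      ‖(Matrix.toEuclideanLin C).toContinuousLinearMap‖ * ‖v‖ := by
    simpa using (Matrix.toEuclideanLin C).toContinuousLinearMap.le_opNorm v
  have hvpos : (0:ℝ) < ‖v‖ := norm_pos_iff.mpr hv0
  nlinarith
/-- auxiliary: for a matrix with `k` columns and `0 < k`, `sval k` bounds the action below. -/
lemma sval_mul_norm_le {m k : ℕ} (hk : 0 < k) (C : Matrix (Fin m) (Fin k) ℝ)
    (v : EuclideanSpace ℝ (Fin k)) :
    sval k C * ‖v‖ ≤ ‖Matrix.toEuclideanLin C v‖ := by
  rcases eq_or_ne v 0 with rfl | hv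
  · simp
  have hvpos : (0:ℝ) < ‖v‖ := norm_pos_iff.mpr hv
  have : sval k C ≤ ‖Matrix.toEuclideanLin C v‖ / ‖v‖ := by
    apply Real.sSup_le
    · rintro c ⟨V, hV, h⟩
      have hVtop : V = ⊤ := by
        apply Submodule.eq_top_of_finrank_eq
        rw [hV, finrank_euclideanSpace_fin]
      have := h v (hVtop ▸ Submodule.mem_top)
      rw [le_div_iff₀ hvpos]
      exact this
    · positivity
  calc sval k C * ‖v‖ ≤ (‖Matrix.toEuclideanLin C v‖ / ‖v‖) * ‖v‖ :=
        mul_le_mul_of_nonneg_right this hvpos.le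
    _ = ‖Matrix.toEuclideanLin C v‖ := by field_simp

lemma sval_nonneg' {m k : ℕ} (hk : 0 < k) (C : Matrix (Fin m) (Fin k) ℝ) :
    0 ≤ sval k C := by
  apply le_csSup (sval_set_bddAbove hk C)
  exact ⟨⊤, by rw [finrank_top, finrank_euclideanSpace_fin], fun v _ => by simp⟩

lemma toEuclideanLin_matmul {m n p : ℕ} (P : Matrix (Fin m) (Fin n) ℝ)
    (Q : Matrix (Fin n) (Fin p) ℝ) :
    Matrix.toEuclideanLin (P * Q) = (Matrix.toEuclideanLin P).comp (Matrix.toEuclideanLin Q) := by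
  simp [Matrix.toEuclideanLin_eq_toLin, Matrix.toLin_mul _ (PiLp.basisFun 2 ℝ (Fin n)) _]

lemma toEuclideanLin_transpose_inner {m n : ℕ} (P : Matrix (Fin m) (Fin n) ℝ)
    (w : EuclideanSpace ℝ (Fin m)) (u : EuclideanSpace ℝ (Fin n)) :
    inner ℝ (Matrix.toEuclideanLin Pᵀ w) u = (inner ℝ w (Matrix.toEuclideanLin P u) : ℝ) := by
  rw [(Matrix.conjTranspose_eq_transpose_of_trivial P).symm,
    Matrix.toEuclideanLin_conjTranspose_eq_adjoint, LinearMap.adjoint_inner_left]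

lemma rank_eq_finrank_colSpace {m n : ℕ} (P : Matrix (Fin m) (Fin n) ℝ) :
    P.rank = Module.finrank ℝ (colSpace P) := by
  rw [colSpace, Matrix.toEuclideanLin_eq_toLin]
  exact Matrix.rank_eq_finrank_range_toLin P _ _

theorem delta_min_lower_bound (D H r : ℕ)
    (A : Matrix (Fin D) (Fin r) ℝ) (G : Matrix (Fin H) (Fin r) ℝ)
    (S : Matrix (Fin H) (Fin H) ℝ)
    (hA : A.rank = r) (hG : G.rank = r)
    (M : Matrix (Fin D) (Fin H) ℝ) (hM : M = A * Gᵀ)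
    (κ : ℝ)
    (hκdef : κ = sInf {t : ℝ | ∃ v ∈ colSpace G, ‖v‖ = 1 ∧
      t = ‖Matrix.toEuclideanLin S v‖})
    (hκ : 0 < κ)
    (δ δ' δmin : ℝ)
    (hδ : δ = sval r M) (hδ' : δ' = sval r (M * Sᵀ))
    (hδmin : δmin = min δ δ') :
    min 1 κ * (sval r A * sval r G) ≤ δmin := by
  -- r > 0, since otherwise κ = 0
  have hr : 0 < r := by
    rcases Nat.eq_zero_or_pos r with h0 | h
    · exfalso
      subst h0
      have hempty : {t : ℝ | ∃ v ∈ colSpace G, ‖v‖ = 1 ∧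
          t = ‖Matrix.toEuclideanLin S v‖} = ∅ := by
        ext t
        simp only [Set.mem_setOf_eq, Set.mem_empty_iff_false, iff_false, not_exists]
        rintro v ⟨⟨x, hx⟩, hv1, -⟩
        have hx0 : x = 0 := Subsingleton.elim _ _
        rw [hx0, map_zero] at hx
        rw [← hx, norm_zero] at hv1
        exact one_ne_zero hv1.symm
      rw [hκdef, hempty, Real.sInf_empty] at hκ
      exact lt_irrefl 0 hκ
    · exact h
  set a := sval r A with ha
  set g := sval r G with hg
  have ha0 : 0 ≤ a := sval_nonneg' hr A
  have hg0 : 0 ≤ g := sval_nonneg' hr G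
  -- κ bound on the column space of G
  have hκle : ∀ w ∈ colSpace G, κ * ‖w‖ ≤ ‖Matrix.toEuclideanLin S w‖ := by
    intro w hw
    rcases eq_or_ne w 0 with rfl | hw0
    · simp
    have hwpos : (0:ℝ) < ‖w‖ := norm_pos_iff.mpr hw0
    have humem : (‖w‖⁻¹ • w) ∈ colSpace G := Submodule.smul_mem _ _ hw
    have hunorm : ‖(‖w‖⁻¹ • w)‖ = 1 := by
      rw [norm_smul, norm_inv, norm_norm, inv_mul_cancel₀ hwpos.ne']
    have hbdd : BddBelow {t : ℝ | ∃ v ∈ colSpace G, ‖v‖ = 1 ∧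
        t = ‖Matrix.toEuclideanLin S v‖} := by
      refine ⟨0, ?_⟩
      rintro t ⟨v, -, -, ht⟩
      rw [ht]; exact norm_nonneg _
    have hκle1 : κ ≤ ‖Matrix.toEuclideanLin S (‖w‖⁻¹ • w)‖ := by
      rw [hκdef]
      exact csInf_le hbdd ⟨_, humem, hunorm, rfl⟩
    rw [_root_.map_smul, norm_smul, norm_inv, norm_norm] at hκle1
    calc κ * ‖w‖ ≤ (‖w‖⁻¹ * ‖Matrix.toEuclideanLin S w‖) * ‖w‖ :=
          mul_le_mul_of_nonneg_right hκle1 hwpos.le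
      _ = ‖Matrix.toEuclideanLin S w‖ := by field_simp
  have hκ1 : min 1 κ ≤ 1 := min_le_left _ _
  have hκ2 : min 1 κ ≤ κ := min_le_right _ _
  set c : ℝ := min 1 κ * (a * g) with hc
  have hfinG : Module.finrank ℝ (colSpace G) = r := by
    rw [← rank_eq_finrank_colSpace, hG]
  -- bound for δ
  have hcM : c ≤ δ := by
    rw [hδ]
    apply le_csSup (sval_set_bddAbove hr M)
    refine ⟨colSpace G, hfinG, ?_⟩
    rintro v ⟨u, rfl⟩
    set Gu := Matrix.toEuclideanLin G u with hGu
    have hMv : Matrix.toEuclideanLin M Gu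
        = Matrix.toEuclideanLin A (Matrix.toEuclideanLin Gᵀ Gu) := by
      rw [hM, toEuclideanLin_matmul]; rfl
    have h1 : a * ‖Matrix.toEuclideanLin Gᵀ Gu‖ ≤ ‖Matrix.toEuclideanLin M Gu‖ := by
      rw [hMv]; exact sval_mul_norm_le hr A _
    have h2 : g * ‖Gu‖ ≤ ‖Matrix.toEuclideanLin Gᵀ Gu‖ := by
      rcases eq_or_ne u 0 with rfl | hu0
      · simp [hGu]
      have hupos : (0:ℝ) < ‖u‖ := norm_pos_iff.mpr hu0
      have hinner : (inner ℝ (Matrix.toEuclideanLin Gᵀ Gu) u : ℝ) = ‖Gu‖ ^ 2 := by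
        rw [toEuclideanLin_transpose_inner, ← hGu, real_inner_self_eq_norm_sq]
      have hcs : (inner ℝ (Matrix.toEuclideanLin Gᵀ Gu) u : ℝ)
          ≤ ‖Matrix.toEuclideanLin Gᵀ Gu‖ * ‖u‖ := real_inner_le_norm _ _
      have hGnorm : g * ‖u‖ ≤ ‖Gu‖ := sval_mul_norm_le hr G u
      have key : (g * ‖Gu‖) * ‖u‖ ≤ ‖Matrix.toEuclideanLin Gᵀ Gu‖ * ‖u‖ := by
        nlinarith [hinner, hcs, mul_le_mul_of_nonneg_right hGnorm (norm_nonneg Gu)]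
      exact le_of_mul_le_mul_right key hupos
    have hag : 0 ≤ a * (g * ‖Gu‖) := by positivity
    calc c * ‖Gu‖ ≤ 1 * (a * g) * ‖Gu‖ := by
          apply mul_le_mul_of_nonneg_right _ (norm_nonneg _)
          exact mul_le_mul_of_nonneg_right hκ1 (by positivity)
      _ = a * (g * ‖Gu‖) := by ring
      _ ≤ a * ‖Matrix.toEuclideanLin Gᵀ Gu‖ := mul_le_mul_of_nonneg_left h2 ha0
      _ ≤ ‖Matrix.toEuclideanLin M Gu‖ := h1
  -- bound for δ'
  have hcM' : c ≤ δ' := by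
    rw [hδ']
    apply le_csSup (sval_set_bddAbove hr (M * Sᵀ))
    set f := (Matrix.toEuclideanLin S).comp (colSpace G).subtype with hf
    have hfinj : Function.Injective f := by
      intro x y hxy
      have hsub : Matrix.toEuclideanLin S ((x:EuclideanSpace ℝ (Fin H)) - y) = 0 := by
        rw [map_sub, sub_eq_zero]
        exact hxy
      have hmem : ((x:EuclideanSpace ℝ (Fin H)) - y) ∈ colSpace G := sub_mem x.2 y.2
      have := hκle _ hmem
      rw [hsub, norm_zero] at this
      have hle : ‖(x:EuclideanSpace ℝ (Fin H)) - y‖ ≤ 0 :=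
        le_of_mul_le_mul_left (by simpa using this) hκ
      have hxy0 : ‖(x:EuclideanSpace ℝ (Fin H)) - y‖ = 0 :=
        le_antisymm hle (norm_nonneg _)
      exact Subtype.ext (sub_eq_zero.mp (norm_eq_zero.mp hxy0))
    have hrange : LinearMap.range f = Submodule.map (Matrix.toEuclideanLin S) (colSpace G) := by
      rw [hf, LinearMap.range_comp, Submodule.range_subtype]
    refine ⟨Submodule.map (Matrix.toEuclideanLin S) (colSpace G), ?_, ?_⟩
    · rw [← hrange, LinearMap.finrank_range_of_inj hfinj, hfinG]
    rintro v ⟨w, hwG, rfl⟩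
    obtain ⟨u, rfl⟩ := hwG
    set Gu := Matrix.toEuclideanLin G u with hGu
    set v := Matrix.toEuclideanLin S Gu with hv
    have hMv : Matrix.toEuclideanLin (M * Sᵀ) v
        = Matrix.toEuclideanLin A (Matrix.toEuclideanLin Gᵀ (Matrix.toEuclideanLin Sᵀ v)) := by
      rw [hM, toEuclideanLin_matmul, toEuclideanLin_matmul]; rfl
    have h1 : a * ‖Matrix.toEuclideanLin Gᵀ (Matrix.toEuclideanLin Sᵀ v)‖
        ≤ ‖Matrix.toEuclideanLin (M * Sᵀ) v‖ := by
      rw [hMv]; exact sval_mul_norm_le hr A _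
    have h2 : κ * (g * ‖v‖) ≤ ‖Matrix.toEuclideanLin Gᵀ (Matrix.toEuclideanLin Sᵀ v)‖ := by
      rcases eq_or_ne u 0 with rfl | hu0
      · simp [hv, hGu]
      have hupos : (0:ℝ) < ‖u‖ := norm_pos_iff.mpr hu0
      have hinner : (inner ℝ (Matrix.toEuclideanLin Gᵀ (Matrix.toEuclideanLin Sᵀ v)) u : ℝ)
          = ‖v‖ ^ 2 := by
        rw [toEuclideanLin_transpose_inner, ← hGu, toEuclideanLin_transpose_inner,
          ← hv, real_inner_self_eq_norm_sq]
      have hcs : (inner ℝ (Matrix.toEuclideanLin Gᵀ (Matrix.toEuclideanLin Sᵀ v)) u : ℝ)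
          ≤ ‖Matrix.toEuclideanLin Gᵀ (Matrix.toEuclideanLin Sᵀ v)‖ * ‖u‖ :=
        real_inner_le_norm _ _
      have hGnorm : g * ‖u‖ ≤ ‖Gu‖ := sval_mul_norm_le hr G u
      have hSnorm : κ * ‖Gu‖ ≤ ‖v‖ := hκle Gu ⟨u, rfl⟩
      have hkg : κ * (g * ‖u‖) ≤ ‖v‖ :=
        le_trans (mul_le_mul_of_nonneg_left hGnorm hκ.le) hSnorm
      have key : (κ * (g * ‖v‖)) * ‖u‖
          ≤ ‖Matrix.toEuclideanLin Gᵀ (Matrix.toEuclideanLin Sᵀ v)‖ * ‖u‖ := by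
        nlinarith [hinner, hcs, mul_le_mul_of_nonneg_right hkg (norm_nonneg v)]
      exact le_of_mul_le_mul_right key hupos
    calc c * ‖v‖ ≤ κ * (a * g) * ‖v‖ := by
          apply mul_le_mul_of_nonneg_right _ (norm_nonneg _)
          exact mul_le_mul_of_nonneg_right hκ2 (by positivity)
      _ = a * (κ * (g * ‖v‖)) := by ring
      _ ≤ a * ‖Matrix.toEuclideanLin Gᵀ (Matrix.toEuclideanLin Sᵀ v)‖ :=
          mul_le_mul_of_nonneg_left h2 ha0
      _ ≤ ‖Matrix.toEuclideanLin (M * Sᵀ) v‖ := h1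
  rw [hδmin]
  exact le_min hcM hcM'
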